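/- If K is a convex body in ℝ^n contained in the closed unit ball centered at each of its own points (i.e., K ∈ S_n defined as K = ⋂_{x∈K} (x + B)), then the c-dual K^c = ⋂_{x∈K} (x + B) satisfies h_K(u) + h_{K^c}(-u) = |u| for every u ∈ ℝ^n. -/

import Mathlib

open RealInnerProductSpace
set_option maxHeartbeats 1000000

lemma key_step {n : ℕ} {K : Set (EuclideanSpace ℝ (Fin n))}
    (hcomp : IsCompact K)
    (hdiam : ∀ x ∈ K, ∀ y ∈ K, dist x y ≤ 1)
    (hcompl : ∀ q : EuclideanSpace ℝ (Fin n), (∀ x ∈ K, dist q x ≤ 1) → q ∈ K)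
    {v z : EuclideanSpace ℝ (Fin n)} (hv : ‖v‖ = 1) (hz : z ∈ K)
    (hmin : ∀ x ∈ K, ⟪z, v⟫ ≤ ⟪x, v⟫) : z + v ∈ K := by
  by_contra hnot
  have hfar0 : ¬ ∀ x ∈ K, dist (z + v) x ≤ 1 := fun h => hnot (hcompl _ h)
  push_neg at hfar0
  obtain ⟨xb, hxbK, hfar⟩ := hfar0
  set e := xb - z with he
  have hzv : z + v - xb = v - e := by rw [he]; abel
  rw [dist_eq_norm, hzv] at hfar
  have he2 : 2 * ⟪v, e⟫ < ‖e‖ ^ 2 := by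
    have h1 : 1 < ‖v - e‖ ^ 2 := by nlinarith [norm_nonneg (v - e)]
    have h2 := norm_sub_sq_real v e
    rw [hv] at h2; nlinarith
  have hepos : 0 < ‖e‖ := by
    rcases eq_or_lt_of_le (norm_nonneg e) with h | h
    · exfalso
      have : e = 0 := by rwa [eq_comm, norm_eq_zero] at h
      rw [this] at he2; simp at he2
    · exact h
  -- the ice-cream cone D
  set D : Set (EuclideanSpace ℝ (Fin n)) := {p | ‖e‖ ^ 2 * ‖p‖ ≤ 2 * ⟪p, e⟫} with hDdef
  have hadd : ∀ p ∈ D, ∀ q ∈ D, p + q ∈ D := by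
    intro p hp q hq
    simp only [hDdef, Set.mem_setOf_eq] at hp hq ⊢
    have h1 := norm_add_le p q
    rw [inner_add_left]
    nlinarith [sq_nonneg ‖e‖]
  have hsmul : ∀ (c : ℝ), 0 ≤ c → ∀ p ∈ D, c • p ∈ D := by
    intro c hc p hp
    simp only [hDdef, Set.mem_setOf_eq] at hp ⊢
    rw [norm_smul, real_inner_smul_left, Real.norm_eq_abs, abs_of_nonneg hc]
    nlinarith
  have h0D : (0 : EuclideanSpace ℝ (Fin n)) ∈ D := by
    simp [hDdef]
  have hDconv : Convex ℝ D := fun p hp q hq a b ha hb _ =>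
    hadd _ (hsmul a ha p hp) _ (hsmul b hb q hq)
  have hDclosed : IsClosed D := by
    have : D = {p : EuclideanSpace ℝ (Fin n) | ‖e‖ ^ 2 * ‖p‖ ≤ 2 * ⟪p, e⟫} := hDdef
    rw [this]
    exact isClosed_le (continuous_const.mul continuous_norm)
      (continuous_const.mul (continuous_id.inner continuous_const))
  obtain ⟨q, hqD, hqmin⟩ :=
    exists_norm_eq_iInf_of_complete_convex ⟨0, h0D⟩ hDclosed.isComplete hDconv v
  have hchar := (norm_eq_iInf_iff_real_inner_le_zero hDconv hqD).1 hqmin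
  set d := v - q with hd
  have hdq : ⟪d, q⟫ = 0 := by
    have h1 := hchar ((2:ℝ) • q) (hsmul 2 (by norm_num) q hqD)
    have h2 := hchar 0 h0D
    have e1 : (2:ℝ) • q - q = q := by
      rw [two_smul]; abel
    rw [e1] at h1
    rw [zero_sub, inner_neg_right] at h2
    linarith
  have hdD : ∀ p ∈ D, ⟪d, p⟫ ≤ 0 := by
    intro p hp
    have h1 := hchar (q + p) (hadd q hqD p hp)
    have e1 : q + p - q = p := by abel
    rwa [e1] at h1
  have hvD : v ∉ D := by
    intro hmem
    simp only [hDdef, Set.mem_setOf_eq, hv, mul_one] at hmem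
    linarith
  have hdv : ⟪d, v⟫ = ‖d‖ ^ 2 := by
    have e1 : v = d + q := by rw [hd]; abel
    conv_lhs => rw [e1]
    rw [inner_add_right, hdq, real_inner_self_eq_norm_sq]
    ring
  have hdne : d ≠ 0 := by
    intro h
    apply hvD
    have : v = q := by
      have := sub_eq_zero.1 (hd ▸ h : v - q = 0)
      exact this
    rwa [this]
  have hdnorm : 0 < ‖d‖ := norm_pos_iff.2 hdne
  have hd2pos : 0 < ‖d‖ ^ 2 := by positivity
  -- perturbation direction
  set ε := ‖d‖ ^ 2 / (2 * (|⟪e, v⟫| + 1)) with hεdef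
  have hεpos : 0 < ε := by positivity
  set Δ := -d + ε • e with hΔdef
  have hΔv : ⟪Δ, v⟫ ≤ -(‖d‖ ^ 2) / 2 := by
    rw [hΔdef, inner_add_left, inner_neg_left, hdv, real_inner_smul_left]
    have h2 : ε * ⟪e, v⟫ ≤ ε * |⟪e, v⟫| :=
      mul_le_mul_of_nonneg_left (le_abs_self _) hεpos.le
    have h3 : ε * |⟪e, v⟫| ≤ ‖d‖ ^ 2 / 2 := by
      rw [hεdef]
      rw [div_mul_eq_mul_div, div_le_div_iff₀ (by positivity) (by norm_num)]
      nlinarith [abs_nonneg ⟪e, v⟫]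
    linarith
  have hΔvneg : ⟪Δ, v⟫ < 0 := lt_of_le_of_lt hΔv (by nlinarith)
  set β := ε * ‖e‖ ^ 2 / 2 with hβdef
  have hβpos : 0 < β := by positivity
  -- points of K on the unit sphere around z lie in D
  have hsph : ∀ x ∈ K, ‖x - z‖ = 1 → ‖e‖ ^ 2 ≤ 2 * ⟪x - z, e⟫ := by
    intro x hx hx1
    have hdxb : dist xb x ≤ 1 := hdiam _ hxbK _ hx
    have e1 : xb - x = e - (x - z) := by rw [he]; abel
    rw [dist_eq_norm, e1] at hdxb
    have h1 : ‖e - (x - z)‖ ^ 2 ≤ 1 := by nlinarith [norm_nonneg (e - (x - z))]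
    have h2 := norm_sub_sq_real e (x - z)
    rw [hx1] at h2
    rw [real_inner_comm]
    nlinarith
  have hsphD : ∀ x ∈ K, ‖x - z‖ = 1 → x - z ∈ D := by
    intro x hx hx1
    simp only [hDdef, Set.mem_setOf_eq]
    rw [hx1, mul_one]
    exact hsph x hx hx1
  have hEβ : ∀ x ∈ K, ‖x - z‖ = 1 → β ≤ ⟪Δ, x - z⟫ := by
    intro x hx hx1
    have h1 := hdD _ (hsphD x hx hx1)
    have h2 := hsph x hx hx1
    rw [hΔdef, inner_add_left, inner_neg_left, real_inner_smul_left, hβdef]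
    have h3 : ⟪e, x - z⟫ = ⟪x - z, e⟫ := real_inner_comm _ _
    nlinarith
  -- the compact set where the derivative is small
  set A : Set (EuclideanSpace ℝ (Fin n)) := K ∩ {x | ⟪Δ, x - z⟫ ≤ β / 2} with hAdef
  have hAcomp : IsCompact A := by
    apply hcomp.inter_right
    have : Continuous fun x : EuclideanSpace ℝ (Fin n) => ⟪Δ, x - z⟫ :=
      Continuous.inner continuous_const ((continuous_id.sub continuous_const))
    exact isClosed_le this continuous_const
  obtain ⟨ρ, hρ0, hρ1, hρbd⟩ : ∃ ρ : ℝ, 0 ≤ ρ ∧ ρ < 1 ∧ ∀ x ∈ A, ‖x - z‖ ≤ ρ := by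
    by_cases hAne : A.Nonempty
    · have hcont : ContinuousOn (fun x : EuclideanSpace ℝ (Fin n) => ‖x - z‖) A :=
        ((continuous_id.sub continuous_const).norm).continuousOn
      obtain ⟨x₀, hx₀A, hx₀max⟩ := hAcomp.exists_isMaxOn hAne hcont
      refine ⟨‖x₀ - z‖, norm_nonneg _, ?_, fun x hx => hx₀max hx⟩
      have hx₀K : x₀ ∈ K := hx₀A.1
      have hle : ‖x₀ - z‖ ≤ 1 := by
        have := hdiam _ hx₀K _ hz
        rwa [dist_eq_norm] at this
      rcases lt_or_eq_of_le hle with h | h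
      · exact h
      · exfalso
        have := hEβ _ hx₀K h
        have := hx₀A.2
        simp only [Set.mem_setOf_eq] at this
        linarith
    · exact ⟨0, le_refl _, by norm_num, fun x hx => absurd ⟨x, hx⟩ hAne⟩
  have hΔne : Δ ≠ 0 := by
    intro h
    rw [h, inner_zero_left] at hΔvneg
    exact lt_irrefl _ hΔvneg
  have hΔnorm : 0 < ‖Δ‖ := norm_pos_iff.2 hΔne
  set t := min ((1 - ρ) / ‖Δ‖) (β / ‖Δ‖ ^ 2) with htdef
  have htpos : 0 < t := lt_min (div_pos (by linarith) hΔnorm) (by positivity)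
  have hq'K : z + t • Δ ∈ K := by
    apply hcompl
    intro x hxK
    have e1 : z + t • Δ - x = t • Δ - (x - z) := by abel
    rw [dist_eq_norm, e1]
    by_cases hcase : ⟪Δ, x - z⟫ ≤ β / 2
    · have hxA : x ∈ A := ⟨hxK, hcase⟩
      have h1 : ‖x - z‖ ≤ ρ := hρbd _ hxA
      have h2 : ‖t • Δ‖ ≤ 1 - ρ := by
        rw [norm_smul, Real.norm_eq_abs, abs_of_pos htpos]
        calc t * ‖Δ‖ ≤ ((1 - ρ) / ‖Δ‖) * ‖Δ‖ :=
              mul_le_mul_of_nonneg_right (min_le_left _ _) hΔnorm.le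
          _ = 1 - ρ := by field_simp
      calc ‖t • Δ - (x - z)‖ ≤ ‖t • Δ‖ + ‖x - z‖ := norm_sub_le _ _
        _ ≤ (1 - ρ) + ρ := add_le_add h2 h1
        _ = 1 := by ring
    · push_neg at hcase
      have hxz1 : ‖x - z‖ ≤ 1 := by
        have := hdiam _ hxK _ hz
        rwa [dist_eq_norm] at this
      have hsq := norm_sub_sq_real (t • Δ) (x - z)
      rw [norm_smul, Real.norm_eq_abs, abs_of_pos htpos, real_inner_smul_left] at hsq
      have htβ : t * ‖Δ‖ ^ 2 ≤ β := by
        calc t * ‖Δ‖ ^ 2 ≤ (β / ‖Δ‖ ^ 2) * ‖Δ‖ ^ 2 :=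
              mul_le_mul_of_nonneg_right (min_le_right _ _) (by positivity)
          _ = β := by field_simp
      have h1 : ‖t • Δ - (x - z)‖ ^ 2 ≤ 1 := by
        rw [hsq]
        have h5 : 2 * (t * ⟪Δ, x - z⟫) ≥ t * β := by nlinarith
        have h6 : t * (t * ‖Δ‖ ^ 2) ≤ t * β := mul_le_mul_of_nonneg_left htβ htpos.le
        nlinarith [norm_nonneg (x - z)]
      nlinarith [norm_nonneg (t • Δ - (x - z))]
  -- contradiction with minimality of z
  have hfinal := hmin _ hq'K
  rw [inner_add_left, real_inner_smul_left] at hfinal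
  nlinarith

theorem stmt_10 (n : ℕ) (K : Set (EuclideanSpace ℝ (Fin n)))
    (hne : K.Nonempty) (hcomp : IsCompact K) (hconv : Convex ℝ K)
    (hball : K = ⋂ x ∈ K, Metric.closedBall x 1) :
    ∀ u : EuclideanSpace ℝ (Fin n),
      sSup ((fun y => (inner ℝ y u : ℝ)) '' K) +
        sSup ((fun y => (inner ℝ y (-u) : ℝ)) '' (⋂ x ∈ K, Metric.closedBall x 1)) = ‖u‖ := by
  intro u
  have hKc : (⋂ x ∈ K, Metric.closedBall x 1) = K := hball.symm
  rw [hKc]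
  have hdiam : ∀ x ∈ K, ∀ y ∈ K, dist x y ≤ 1 := by
    intro x hx y hy
    have hx' : x ∈ ⋂ x ∈ K, Metric.closedBall x 1 := hball ▸ hx
    exact Metric.mem_closedBall.1 (Set.mem_iInter₂.1 hx' y hy)
  have hcompl : ∀ q : EuclideanSpace ℝ (Fin n), (∀ x ∈ K, dist q x ≤ 1) → q ∈ K := by
    intro q hq
    rw [hball]
    exact Set.mem_iInter₂.2 fun x hx => Metric.mem_closedBall.2 (hq x hx)
  by_cases hu : u = 0
  · subst hu
    obtain ⟨y₀, hy₀⟩ := hne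
    have h1 : (fun y : EuclideanSpace ℝ (Fin n) => (inner ℝ y (0 : EuclideanSpace ℝ (Fin n)) : ℝ)) '' K = {0} := by
      apply Set.eq_singleton_iff_nonempty_unique_mem.2
      constructor
      · exact ⟨_, ⟨y₀, hy₀, rfl⟩⟩
      · rintro a ⟨y, hy, rfl⟩
        simp
    have h2 : (fun y : EuclideanSpace ℝ (Fin n) => (inner ℝ y (-(0 : EuclideanSpace ℝ (Fin n))) : ℝ)) '' K = {0} := by
      apply Set.eq_singleton_iff_nonempty_unique_mem.2
      constructor
      · exact ⟨_, ⟨y₀, hy₀, rfl⟩⟩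
      · rintro a ⟨y, hy, rfl⟩
        simp
    rw [h1, h2]
    simp
  · have hunorm : 0 < ‖u‖ := norm_pos_iff.2 hu
    set v : EuclideanSpace ℝ (Fin n) := ‖u‖⁻¹ • u with hvdef
    have hv : ‖v‖ = 1 := by
      rw [hvdef, norm_smul, Real.norm_eq_abs, abs_of_pos (by positivity)]
      field_simp
    have hcont : Continuous fun y : EuclideanSpace ℝ (Fin n) => ⟪y, v⟫ :=
      continuous_id.inner continuous_const
    obtain ⟨z, hzK, hzmin⟩ := hcomp.exists_isMinOn hne hcont.continuousOn
    have hmin : ∀ x ∈ K, ⟪z, v⟫ ≤ ⟪x, v⟫ := fun x hx => hzmin hx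
    have hzvK : z + v ∈ K := key_step hcomp hdiam hcompl hv hzK hmin
    have hbdd1 : BddAbove ((fun y => (inner ℝ y u : ℝ)) '' K) :=
      (hcomp.image (continuous_id.inner continuous_const)).bddAbove
    have hbdd2 : BddAbove ((fun y => (inner ℝ y (-u) : ℝ)) '' K) :=
      (hcomp.image (continuous_id.inner continuous_const)).bddAbove
    have hne1 : ((fun y => (inner ℝ y u : ℝ)) '' K).Nonempty := hne.image _
    have hne2 : ((fun y => (inner ℝ y (-u) : ℝ)) '' K).Nonempty := hne.image _
    have hvu : ⟪v, u⟫ = ‖u‖ := by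
      rw [hvdef, real_inner_smul_left, real_inner_self_eq_norm_sq]
      field_simp
    have hl1 : (⟪z + v, u⟫ : ℝ) ≤ sSup ((fun y => (inner ℝ y u : ℝ)) '' K) :=
      le_csSup hbdd1 ⟨z + v, hzvK, rfl⟩
    have hl2 : (⟪z, -u⟫ : ℝ) ≤ sSup ((fun y => (inner ℝ y (-u) : ℝ)) '' K) :=
      le_csSup hbdd2 ⟨z, hzK, rfl⟩
    have hub : sSup ((fun y => (inner ℝ y u : ℝ)) '' K)
        + sSup ((fun y => (inner ℝ y (-u) : ℝ)) '' K) ≤ ‖u‖ := by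
      have h2 : sSup ((fun y => (inner ℝ y u : ℝ)) '' K)
          ≤ ‖u‖ - sSup ((fun y => (inner ℝ y (-u) : ℝ)) '' K) := by
        apply csSup_le hne1
        rintro a ⟨y, hy, rfl⟩
        have h3 : sSup ((fun y => (inner ℝ y (-u) : ℝ)) '' K) ≤ ‖u‖ - ⟪y, u⟫ := by
          apply csSup_le hne2
          rintro b ⟨y', hy', rfl⟩
          have hle := real_inner_le_norm (y - y') u
          have hd := hdiam y hy y' hy'
          rw [dist_eq_norm] at hd
          have h4 : (⟪y - y', u⟫ : ℝ) ≤ ‖u‖ := by nlinarith [norm_nonneg (y - y'), norm_nonneg u]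
          rw [inner_sub_left] at h4
          show (⟪y', -u⟫ : ℝ) ≤ ‖u‖ - ⟪y, u⟫
          rw [inner_neg_right]
          linarith
        linarith
      linarith
    have hlow : ‖u‖ ≤ sSup ((fun y => (inner ℝ y u : ℝ)) '' K)
        + sSup ((fun y => (inner ℝ y (-u) : ℝ)) '' K) := by
      have h5 : (⟪z + v, u⟫ : ℝ) + ⟪z, -u⟫ = ‖u‖ := by
        rw [inner_add_left, inner_neg_right, hvu]
        ring
      linarith
    linarith
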